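/- Fix positive integers n, m, real n×n matrices A and L with L symmetric, a real n×m matrix B, reals q and r with r > 0, T > 0, a continuous function x̄ : [0,T] → ℝⁿ, M ≥ 0, and p ∈ ℝⁿ. Let Γ, β, δ be continuously differentiable on [0,T], with Γ(t) symmetric for all t, solving Γ' = (1/r)·Γ B Bᵀ Γ − Γ A − Aᵀ Γ − q·I, β' = ((1/r)·Γ B Bᵀ − Aᵀ) β − q·L x̄, δ' = (1/(2r))·⟪β, B Bᵀ β⟫, with Γ(T) = M·I, β(T) = −M·p, δ(T) = (M/2)‖p‖². Suppose x̂ : [0,T] → ℝⁿ is continuously differentiable with x̂(0) = x⁰ and x̂' = A x̂ − (1/r)·B Bᵀ (Γ x̂ + β) on [0,T], and define û(t) = −(1/r)·Bᵀ(Γ(t) x̂(t) + β(t)). Then ∫₀ᵀ [ (q/2)‖x̂(t)‖² + q⟪x̄(t), L x̂(t)⟫ + (r/2)‖û(t)‖² ] dt + (M/2)‖x̂(T) − p‖² = ½⟪x⁰, Γ(0) x⁰⟫ + ⟪β(0), x⁰⟫ + δ(0). -/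

import Mathlib

open scoped RealInnerProductSpace Matrix

attribute [local instance] Matrix.normedAddCommGroup Matrix.normedSpace

namespace CLAux

variable {k l : ℕ}


lemma gl_mul {j : ℕ} (X : Matrix (Fin k) (Fin l) ℝ) (Y : Matrix (Fin l) (Fin j) ℝ)
    (x : EuclideanSpace ℝ (Fin j)) :
    Matrix.toEuclideanLin (X * Y) x = Matrix.toEuclideanLin X (Matrix.toEuclideanLin Y x) := by
  simp [Matrix.toEuclideanLin_apply, Matrix.mulVec_mulVec]

lemma gl_one (x : EuclideanSpace ℝ (Fin k)) :
    Matrix.toEuclideanLin (1 : Matrix (Fin k) (Fin k) ℝ) x = x := by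
  simp [Matrix.toEuclideanLin_apply]

lemma gl_adj (X : Matrix (Fin k) (Fin l) ℝ) (x : EuclideanSpace ℝ (Fin k))
    (y : EuclideanSpace ℝ (Fin l)) :
    ⟪Matrix.toEuclideanLin Xᵀ x, y⟫ = ⟪x, Matrix.toEuclideanLin X y⟫ := by
  rw [← Matrix.conjTranspose_eq_transpose_of_trivial,
    Matrix.toEuclideanLin_conjTranspose_eq_adjoint, LinearMap.adjoint_inner_left]

noncomputable def gCLM (k l : ℕ) :
    Matrix (Fin k) (Fin l) ℝ →L[ℝ] EuclideanSpace ℝ (Fin l) →L[ℝ] EuclideanSpace ℝ (Fin k) :=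
  LinearMap.toContinuousLinearMap
    ((LinearMap.toContinuousLinearMap.toLinearMap).comp
      (Matrix.toEuclideanLin.toLinearMap))

@[simp] lemma gCLM_apply (X : Matrix (Fin k) (Fin l) ℝ) (x : EuclideanSpace ℝ (Fin l)) :
    gCLM k l X x = Matrix.toEuclideanLin X x := rfl

end CLAux

open CLAux

set_option maxHeartbeats 2000000 in
/-- Attainment half of the best-response lemma: the closed-loop trajectory driven by the
candidate optimal feedback `û = −(1/r)Bᵀ(Γ x̂ + β)` achieves exactly the quadratic value
`½⟪x⁰, Γ(0)x⁰⟫ + ⟪β(0), x⁰⟫ + δ(0)` for the LQ tracking cost. -/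
theorem closed_loop_cost_attainment (n m : ℕ) (hn : 0 < n) (hm : 0 < m)
    (A L : Matrix (Fin n) (Fin n) ℝ) (hL : L.IsSymm)
    (B : Matrix (Fin n) (Fin m) ℝ) (q r : ℝ) (hr : 0 < r)
    (T : ℝ) (hT : 0 < T)
    (xbar : ℝ → EuclideanSpace ℝ (Fin n)) (hxbar : Continuous xbar)
    (M : ℝ) (hM : 0 ≤ M) (p : EuclideanSpace ℝ (Fin n))
    (Γ : ℝ → Matrix (Fin n) (Fin n) ℝ) (β : ℝ → EuclideanSpace ℝ (Fin n)) (δ : ℝ → ℝ)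
    (hΓs : ∀ t : ℝ, (Γ t).IsSymm)
    (hΓ : ∀ t ∈ Set.Icc (0 : ℝ) T, HasDerivAt Γ
      ((1 / r) • (Γ t * B * Bᵀ * Γ t) - Γ t * A - Aᵀ * Γ t -
        q • (1 : Matrix (Fin n) (Fin n) ℝ)) t)
    (hβ : ∀ t ∈ Set.Icc (0 : ℝ) T, HasDerivAt β
      (Matrix.toEuclideanLin ((1 / r) • (Γ t * B * Bᵀ) - Aᵀ) (β t) -
        q • Matrix.toEuclideanLin L (xbar t)) t)
    (hδ : ∀ t ∈ Set.Icc (0 : ℝ) T, HasDerivAt δ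
      ((1 / (2 * r)) * ⟪β t, Matrix.toEuclideanLin (B * Bᵀ) (β t)⟫) t)
    (hΓT : Γ T = M • (1 : Matrix (Fin n) (Fin n) ℝ))
    (hβT : β T = (-M) • p)
    (hδT : δ T = (M / 2) * ‖p‖ ^ 2)
    (xhat : ℝ → EuclideanSpace ℝ (Fin n)) (x0 : EuclideanSpace ℝ (Fin n))
    (hxhat0 : xhat 0 = x0)
    (hxhat : ∀ t ∈ Set.Icc (0 : ℝ) T, HasDerivAt xhat
      (Matrix.toEuclideanLin A (xhat t) -
        (1 / r) • Matrix.toEuclideanLin (B * Bᵀ)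
          (Matrix.toEuclideanLin (Γ t) (xhat t) + β t)) t) :
    (∫ t in (0 : ℝ)..T, ((q / 2) * ‖xhat t‖ ^ 2 +
        q * ⟪xbar t, Matrix.toEuclideanLin L (xhat t)⟫ +
        (r / 2) * ‖(-(1 / r)) •
          Matrix.toEuclideanLin Bᵀ (Matrix.toEuclideanLin (Γ t) (xhat t) + β t)‖ ^ 2)) +
      (M / 2) * ‖xhat T - p‖ ^ 2 =
    (1 / 2) * ⟪x0, Matrix.toEuclideanLin (Γ 0) x0⟫ + ⟪β 0, x0⟫ + δ 0 := by
  have hr' : r ≠ 0 := ne_of_gt hr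
  -- the value function along the trajectory
  set V : ℝ → ℝ := fun t =>
    (1 / 2) * ⟪xhat t, gCLM n n (Γ t) (xhat t)⟫ + ⟪β t, xhat t⟫ + δ t with hV
  set F : ℝ → ℝ := fun t =>
    (q / 2) * ‖xhat t‖ ^ 2 + q * ⟪xbar t, Matrix.toEuclideanLin L (xhat t)⟫ +
      (r / 2) * ‖(-(1 / r)) •
        Matrix.toEuclideanLin Bᵀ (Matrix.toEuclideanLin (Γ t) (xhat t) + β t)‖ ^ 2 with hF
  have hderiv : ∀ t ∈ Set.Icc (0 : ℝ) T, HasDerivAt (fun s => -(V s)) (F t) t := by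
    intro t ht
    have hx := hxhat t ht
    have hb := hβ t ht
    have hG := hΓ t ht
    have hd := hδ t ht
    have h1 : HasDerivAt (fun s => gCLM n n (Γ s))
        (gCLM n n ((1 / r) • (Γ t * B * Bᵀ * Γ t) - Γ t * A - Aᵀ * Γ t -
          q • (1 : Matrix (Fin n) (Fin n) ℝ))) t :=
      (gCLM n n).hasFDerivAt.comp_hasDerivAt t hG
    have h2 := h1.clm_apply hx
    have h3 := (HasDerivAt.inner ℝ hx h2)
    have h4 := ((h3.const_mul ((1:ℝ)/2)).add (HasDerivAt.inner ℝ hb hx)).add hd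
    have h5 : HasDerivAt (fun s => -(V s)) _ t := h4.neg
    convert h5 using 1
    simp only [hF, gCLM_apply, map_sub, map_smul, map_add, LinearMap.sub_apply,
      LinearMap.smul_apply, LinearMap.add_apply, gl_mul, gl_one,
      inner_add_left, inner_add_right, inner_sub_left, inner_sub_right,
      real_inner_smul_left, real_inner_smul_right,
      norm_smul, norm_neg, Real.norm_eq_abs, mul_pow, sq_abs,
      inner_neg_left, inner_neg_right]
    have hGs : (Γ t)ᵀ = Γ t := hΓs t
    have hLs : Lᵀ = L := hL
    have hnorm : ∀ y z : EuclideanSpace ℝ (Fin m), ‖y + z‖^2 = ⟪y,y⟫ + 2*⟪y,z⟫ + ⟪z,z⟫ := by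
      intro y z
      rw [norm_add_sq_real]
      simp only [real_inner_self_eq_norm_sq]
    rw [hnorm]
    simp only [ContinuousLinearMap.sub_apply, ContinuousLinearMap.smul_apply,
      ContinuousLinearMap.add_apply, gCLM_apply, map_sub, map_smul, map_add,
      LinearMap.sub_apply, LinearMap.smul_apply, LinearMap.add_apply, gl_mul, gl_one,
      inner_add_left, inner_add_right, inner_sub_left, inner_sub_right,
      real_inner_smul_left, real_inner_smul_right, ← gl_adj,
      Matrix.transpose_transpose, hGs, hLs]
    have hBadj : ∀ (y : EuclideanSpace ℝ (Fin m)) (z : EuclideanSpace ℝ (Fin n)),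
        ⟪Matrix.toEuclideanLin B y, z⟫ = ⟪y, Matrix.toEuclideanLin Bᵀ z⟫ := by
      intro y z
      simpa using gl_adj Bᵀ y z
    have e45 : ⟪Matrix.toEuclideanLin (Γ t) (Matrix.toEuclideanLin A (xhat t)), xhat t⟫ =
        ⟪Matrix.toEuclideanLin Aᵀ (Matrix.toEuclideanLin (Γ t) (xhat t)), xhat t⟫ := by
      conv_lhs => rw [← hGs]
      rw [gl_adj, gl_adj]
      exact real_inner_comm _ _
    have e92 : ⟪Matrix.toEuclideanLin (Γ t) (Matrix.toEuclideanLin B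
          (Matrix.toEuclideanLin Bᵀ (β t))), xhat t⟫ =
        ⟪Matrix.toEuclideanLin B (Matrix.toEuclideanLin Bᵀ
          (Matrix.toEuclideanLin (Γ t) (xhat t))), β t⟫ := by
      conv_lhs => rw [← hGs]
      rw [gl_adj]
      simp only [hBadj]
      exact real_inner_comm _ _
    rw [e45, e92, show ‖xhat t‖^2 = ⟪xhat t, xhat t⟫ from (real_inner_self_eq_norm_sq _).symm]
    field_simp
    ring
  -- continuity on the interval
  have hcx : ContinuousOn xhat (Set.Icc 0 T) := fun t ht =>
    ((hxhat t ht).continuousAt).continuousWithinAt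
  have hcb : ContinuousOn β (Set.Icc 0 T) := fun t ht =>
    ((hβ t ht).continuousAt).continuousWithinAt
  have hcG : ContinuousOn Γ (Set.Icc 0 T) := fun t ht =>
    ((hΓ t ht).continuousAt).continuousWithinAt
  have hcF : ContinuousOn F (Set.Icc 0 T) := by
    have hGx : ContinuousOn (fun t => Matrix.toEuclideanLin (Γ t) (xhat t) + β t)
        (Set.Icc 0 T) := by
      refine ContinuousOn.add ?_ hcb
      have : ContinuousOn (fun t => gCLM n n (Γ t) (xhat t)) (Set.Icc 0 T) :=
        ((gCLM n n).continuous.comp_continuousOn hcG).clm_apply hcx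
      simpa using this
    refine ContinuousOn.add (ContinuousOn.add ?_ ?_) ?_
    · exact (continuousOn_const.mul ((hcx.norm).pow 2))
    · refine continuousOn_const.mul ?_
      exact ContinuousOn.inner (hxbar.continuousOn)
        (((Matrix.toEuclideanLin L).toContinuousLinearMap).continuous.comp_continuousOn hcx)
    · refine continuousOn_const.mul ?_
      refine ContinuousOn.pow (ContinuousOn.norm ?_) 2
      exact ((((Matrix.toEuclideanLin (Bᵀ)).toContinuousLinearMap).continuous.comp_continuousOn
        hGx).const_smul (-(1 / r)))
  have hint : IntervalIntegrable F MeasureTheory.volume 0 T :=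
    (hcF.mono (by rw [Set.uIcc_of_le hT.le])).intervalIntegrable
  have hFTC : ∫ t in (0:ℝ)..T, F t = -(V T) - -(V 0) :=
    intervalIntegral.integral_eq_sub_of_hasDerivAt
      (fun t ht => hderiv t (by rwa [Set.uIcc_of_le hT.le] at ht)) hint
  have hVT : V T = (M / 2) * ‖xhat T - p‖ ^ 2 := by
    simp only [hV, hΓT, hβT, hδT, gCLM_apply, map_smul, LinearMap.smul_apply, gl_one,
      real_inner_smul_right, real_inner_smul_left, real_inner_self_eq_norm_sq]
    rw [norm_sub_sq_real, real_inner_comm p (xhat T)]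
    ring
  have hV0 : V 0 = (1 / 2) * ⟪x0, Matrix.toEuclideanLin (Γ 0) x0⟫ + ⟪β 0, x0⟫ + δ 0 := by
    simp [hV, hxhat0, gCLM_apply]
  calc (∫ t in (0:ℝ)..T, F t) + (M / 2) * ‖xhat T - p‖ ^ 2
      = (-(V T) - -(V 0)) + V T := by rw [hFTC, hVT]
    _ = V 0 := by ring
    _ = _ := hV0
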